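/- Let K be a field and let r, g, h be elements of K with t := 1 + r*g ≠ 0 and 1 + g*h ≠ 0. Then 1 + (g/t)*(r*t + t^2*h) ≠ 0, and r + h/(1 + g*h) = (r*t + t^2*h)/(1 + (g/t)*(r*t + t^2*h)). (This is the impedance equivalence of Lemma 14: the series connection of a resistor r with the parallel connection of a conductor g and an impedance h equals the parallel connection of a conductor g/(1+r*g) with the series connection of a resistor r*(1+r*g) and the impedance (1+r*g)^2*h.) -/

import Mathlib

/-- Lemma 14 impedance equivalence: for `r`, `g`, `h` in a field `K` with
`t := 1 + r*g ≠ 0` and `1 + g*h ≠ 0`, the denominator `1 + (g/t)*(r*t + t^2*h)` is nonzero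
and `r + h/(1 + g*h) = (r*t + t^2*h)/(1 + (g/t)*(r*t + t^2*h))`. -/
theorem stmt_17 {K : Type*} [Field K] (r g h : K)
    (ht : 1 + r * g ≠ 0) (hgh : 1 + g * h ≠ 0) :
    1 + (g / (1 + r * g)) * (r * (1 + r * g) + (1 + r * g) ^ 2 * h) ≠ 0 ∧
    r + h / (1 + g * h)
      = (r * (1 + r * g) + (1 + r * g) ^ 2 * h) /
        (1 + (g / (1 + r * g)) * (r * (1 + r * g) + (1 + r * g) ^ 2 * h)) := by
  have key : 1 + (g / (1 + r * g)) * (r * (1 + r * g) + (1 + r * g) ^ 2 * h)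
      = (1 + r * g) * (1 + g * h) := by
    rw [div_mul_eq_mul_div, eq_comm, ← sub_eq_zero]
    field_simp
    ring
  refine ⟨?_, ?_⟩
  · rw [key]; exact mul_ne_zero ht hgh
  · rw [key, eq_comm, ← sub_eq_zero]
    field_simp
    ring
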